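/- Fix an odd n ≥ 3 and g ≥ 0, and let π: R_{g,n} → R_{g,n−2} be the ring homomorphism induced by sending α ↦ α, β ↦ β, γ ↦ γ, δ_i ↦ δ_i for i ≤ n−3, δ_{n−1} ↦ −δ_{n−2}, δ_n ↦ δ_{n−2} (well-defined since it preserves the defining relations). For a subset I ⊆ {1,…,n} with |I| ≤ (n−1)/2, let R_{g,n}^I be the image in R_{g,n} of δ^I·ℂ[ω,β,γ] ⊕ δ^{Iᶜ}·ℂ[ω,β,γ]. Then the restriction of π to R_{g,n}^I is injective. -/

import Mathlib

/-!
STATEMENT 14: Fix odd `n = k+2 ≥ 3` and `g ≥ 0`.  Let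
`π : R_{g,n} → R_{g,n−2}` be induced by `ω ↦ ω, β ↦ β, γ ↦ γ`,
`δ_i ↦ δ_i` (for the first `n−2` of the δ's), `δ_{n−1} ↦ −δ_{n−2}`, `δ_n ↦ δ_{n−2}`
(0-indexed: `δ_i ↦ δ_i` for `i < k`, `δ_k ↦ −δ_{k−1}`, `δ_{k+1} ↦ δ_{k−1}`).
For `I ⊆ {1,…,n}` with `|I| ≤ (n−1)/2`, let `R_{g,n}^I` be the image in `R_{g,n}` of
`δ^I·ℂ[ω,β,γ] ⊕ δ^{Iᶜ}·ℂ[ω,β,γ]`.  Then `π` restricted to `R_{g,n}^I` is injective;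
equivalently, for every element `x = (rename f)·δ^I + (rename h)·δ^{Iᶜ}` of the
representing subspace, if `π(x)` lies in the relation ideal of `R_{g,k}` then `x`
lies in the relation ideal of `R_{g,k+2}`.
Variables: `ω = X (inl 0)`, `β = X (inl 1)`, `γ = X (inl 2)`, `δ_i = X (inr i)`.
-/

open MvPolynomial

/-- The ideal `(γ^{g+1}, δ₁²+β−2, …, δ_n²+β−2)`. -/
noncomputable def Stmt14.rel (n g : ℕ) : Ideal (MvPolynomial (Fin 3 ⊕ Fin n) ℂ) :=
  Ideal.span ({(X (Sum.inl 2) : MvPolynomial (Fin 3 ⊕ Fin n) ℂ) ^ (g + 1)} ∪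
    Set.range fun i : Fin n =>
      (X (Sum.inr i) : MvPolynomial (Fin 3 ⊕ Fin n) ℂ) ^ 2 + X (Sum.inl 1) - 2)

/-- The homomorphism `π = π^{g,n}_{g,n−2}` on polynomial rings (`n = k+2`):
`ω,β,γ ↦ ω,β,γ`, `δ_i ↦ δ_i` for `i < k`, `δ_k ↦ −δ_{k−1}`, `δ_{k+1} ↦ δ_{k−1}`. -/
noncomputable def Stmt14.pi (k : ℕ) (hk : 0 < k) :
    MvPolynomial (Fin 3 ⊕ Fin (k + 2)) ℂ →ₐ[ℂ] MvPolynomial (Fin 3 ⊕ Fin k) ℂ :=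
  MvPolynomial.aeval (Sum.elim (fun j => X (Sum.inl j)) fun i : Fin (k + 2) =>
    if h : (i : ℕ) < k then X (Sum.inr ⟨(i : ℕ), h⟩)
    else if (i : ℕ) = k then -X (Sum.inr ⟨k - 1, Nat.sub_lt hk one_pos⟩)
    else X (Sum.inr ⟨k - 1, Nat.sub_lt hk one_pos⟩))

noncomputable section S14sec

namespace S14

abbrev B := MvPolynomial (Fin 3) ℂ
abbrev A2 := MvPolynomial (Fin 2) ℂ
abbrev A1 := MvPolynomial (Fin 1) ℂ

def vs : Fin 3 → B := ![X 0, 2 - X 1 ^ 2, X 2]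
def sig : MvPolynomial (Fin 3) ℂ →ₐ[ℂ] B := aeval vs
def theta : A2 →ₐ[ℂ] A2 := aeval ![2 - X 0 ^ 2, X 1]
abbrev E : B ≃ₐ[ℂ] Polynomial A2 := (renameEquiv ℂ (Equiv.swap 0 2)).trans (finSuccEquiv ℂ 2)
abbrev E2 : A2 ≃ₐ[ℂ] Polynomial A1 := finSuccEquiv ℂ 1

def q : Polynomial A1 := 2 - Polynomial.X ^ 2

lemma E2_theta (p : A2) : E2 (theta p) =
    Polynomial.aeval q (E2 p) := by
  have h : (E2.toAlgHom.comp theta) =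
      ((Polynomial.aeval q).restrictScalars ℂ).comp E2.toAlgHom := by
    apply MvPolynomial.algHom_ext
    intro i
    refine Fin.cases ?_ (fun j => ?_) i
    · show E2 (theta (X 0)) = Polynomial.aeval q (E2 (X 0))
      have h1 : theta (X 0) = 2 - X 0 ^ 2 := by simp [theta]
      rw [h1, map_sub, map_pow, map_ofNat, finSuccEquiv_X_zero]
      simp [q]
    · have hj : j = 0 := Subsingleton.elim _ _
      subst hj
      show E2 (theta (X (Fin.succ 0))) = Polynomial.aeval q (E2 (X (Fin.succ 0)))
      have h1 : theta (X (Fin.succ 0)) = X (Fin.succ 0) := by simp [theta]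
      rw [h1, finSuccEquiv_X_succ, Polynomial.aeval_C, Polynomial.algebraMap_eq]
  exact AlgHom.congr_fun h p

lemma theta_inj : Function.Injective theta := by
  have key : ∀ p : A2, theta p = 0 → p = 0 := by
    intro p hp
    have h2 : (E2 p).comp q = 0 := by
      rw [Polynomial.comp_eq_aeval, ← E2_theta, hp, map_zero]
    rcases Polynomial.comp_eq_zero_iff.mp h2 with h | ⟨-, hq⟩
    · exact E2.injective (by simpa using h)
    · exfalso
      have := congrArg (fun r => Polynomial.coeff r 2) hq
      simp [q] at this
  intro a b hab
  have h0 : theta (a - b) = 0 := by rw [map_sub, hab, sub_self]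
  exact sub_eq_zero.mp (key _ h0)

lemma E_X0 : E (X 0) = Polynomial.C (X 1) := by
  show (finSuccEquiv ℂ 2) (rename (Equiv.swap 0 2) (X 0)) = _
  rw [rename_X, Equiv.swap_apply_left,
    show (X (2 : Fin 3) : B) = X (Fin.succ 1) from rfl, finSuccEquiv_X_succ]

lemma E_X1 : E (X 1) = Polynomial.C (X 0) := by
  show (finSuccEquiv ℂ 2) (rename (Equiv.swap 0 2) (X 1)) = _
  rw [rename_X, Equiv.swap_apply_of_ne_of_ne (by decide) (by decide),
    show (X (1 : Fin 3) : B) = X (Fin.succ 0) from rfl, finSuccEquiv_X_succ]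

lemma E_X2 : E (X 2) = Polynomial.X := by
  show (finSuccEquiv ℂ 2) (rename (Equiv.swap 0 2) (X 2)) = _
  rw [rename_X, Equiv.swap_apply_right, finSuccEquiv_X_zero]

lemma E_C (a : ℂ) : E (C a) = Polynomial.C (MvPolynomial.C a) := by
  rw [← MvPolynomial.algebraMap_eq, AlgEquiv.commutes]
  rfl

lemma E_sig (p : B) : E (sig p) = Polynomial.map theta (E p) := by
  induction p using MvPolynomial.induction_on with
  | C a =>
      rw [show sig (C a) = C a from by simp [sig, algebraMap_eq], E_C, Polynomial.map_C]
      congr 1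
      simp [theta, algebraMap_eq]
  | add p q hp hq => simp only [map_add, Polynomial.map_add, hp, hq]
  | mul_X p i hp =>
      simp only [map_mul, Polynomial.map_mul, hp]
      refine congrArg₂ (· * ·) rfl ?_
      refine Fin.cases ?_ (fun j => Fin.cases ?_ (fun l => ?_) j) i
      · have h1 : sig (X 0) = X 0 := by simp [sig, vs]
        rw [h1, E_X0, Polynomial.map_C]
        congr 1
        simp [theta]
      · have h1 : sig (X (Fin.succ 0)) = 2 - X 1 ^ 2 := by simp [sig, vs]
        rw [show (X (Fin.succ 0) : B) = X 1 from rfl] at h1 ⊢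
        rw [h1, map_sub, map_pow, map_ofNat, E_X1, Polynomial.map_C]
        have h2 : (theta (X 0) : A2) = 2 - X 0 ^ 2 := by simp [theta]
        rw [show ((↑theta : A2 →+* A2) (X 0) : A2) = theta (X 0) from rfl, h2]
        rw [map_sub, map_pow, map_ofNat]
      · have hl : l = 0 := Subsingleton.elim _ _
        subst hl
        have h1 : sig (X (Fin.succ (Fin.succ 0))) = X 2 := by simp [sig, vs]
        rw [show (X (Fin.succ (Fin.succ 0)) : B) = X 2 from rfl] at h1 ⊢
        rw [h1, E_X2, Polynomial.map_X]

lemma sig_dvd {m c : ℕ} {f : MvPolynomial (Fin 3) ℂ}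
    (h : (X 2 : B) ^ m ∣ X 1 ^ c * sig f) : (X 2 : B) ^ m ∣ f := by
  have hE : (Polynomial.X ^ m : Polynomial A2) ∣
      Polynomial.C ((X 0 : A2) ^ c) * Polynomial.map theta (E f) := by
    have h2 := map_dvd E h
    rw [map_pow, map_mul, map_pow, E_X2, E_X1, E_sig, ← Polynomial.C_pow] at h2
    exact h2
  have hcoeff : ∀ d < m, (E f).coeff d = 0 := by
    intro d hd
    have h0 := Polynomial.X_pow_dvd_iff.mp hE d hd
    rw [Polynomial.coeff_C_mul, Polynomial.coeff_map] at h0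
    have hx : (X 0 : A2) ^ c ≠ 0 := pow_ne_zero _ (MvPolynomial.X_ne_zero _)
    have h1 : theta ((E f).coeff d) = 0 := (mul_eq_zero.mp h0).resolve_left hx
    have h3 : theta ((E f).coeff d) = theta 0 := by rw [h1, map_zero]
    exact theta_inj h3
  have hdvd : (Polynomial.X ^ m : Polynomial A2) ∣ E f :=
    Polynomial.X_pow_dvd_iff.mpr hcoeff
  have h2 : E ((X 2 : B) ^ m) ∣ E f := by rw [map_pow, E_X2]; exact hdvd
  have h3 := map_dvd E.symm h2
  rwa [AlgEquiv.symm_apply_apply, AlgEquiv.symm_apply_apply] at h3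

def Jg (g : ℕ) : Ideal B := Ideal.span {(X 2 : B) ^ (g + 1)}

variable {k : ℕ}

def cc (hk0 : 0 < k) (ε : Fin k → ℂ) (i : Fin (k + 2)) : ℂ :=
  if h : (i : ℕ) < k then ε ⟨i, h⟩
  else if (i : ℕ) = k then -ε ⟨k - 1, Nat.sub_lt hk0 one_pos⟩
  else ε ⟨k - 1, Nat.sub_lt hk0 one_pos⟩

def W (ε : Fin k → ℂ) : Fin 3 ⊕ Fin k → B := Sum.elim vs fun i => C (ε i) * X 1

lemma chi_pi (hk0 : 0 < k) (ε : Fin k → ℂ) (x : MvPolynomial (Fin 3 ⊕ Fin (k + 2)) ℂ) :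
    aeval (W ε) (Stmt14.pi k hk0 x) =
      aeval (Sum.elim vs fun i => C (cc hk0 ε i) * X 1) x := by
  rw [Stmt14.pi]
  have hcomp := MvPolynomial.comp_aeval
    (f := Sum.elim (fun j => (X (Sum.inl j) : MvPolynomial (Fin 3 ⊕ Fin k) ℂ))
      fun i : Fin (k + 2) =>
        if h : (i : ℕ) < k then X (Sum.inr ⟨(i : ℕ), h⟩)
        else if (i : ℕ) = k then -X (Sum.inr ⟨k - 1, Nat.sub_lt hk0 one_pos⟩)
        else X (Sum.inr ⟨k - 1, Nat.sub_lt hk0 one_pos⟩))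
    (φ := aeval (W ε))
  have h1 := AlgHom.congr_fun hcomp x
  simp only [AlgHom.coe_comp, Function.comp_apply] at h1
  rw [h1]
  have hfun : (fun v => (aeval (W ε))
      (Sum.elim (fun j => (X (Sum.inl j) : MvPolynomial (Fin 3 ⊕ Fin k) ℂ))
        (fun i : Fin (k + 2) =>
          if h : (i : ℕ) < k then X (Sum.inr ⟨(i : ℕ), h⟩)
          else if (i : ℕ) = k then -X (Sum.inr ⟨k - 1, Nat.sub_lt hk0 one_pos⟩)
          else X (Sum.inr ⟨k - 1, Nat.sub_lt hk0 one_pos⟩)) v))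
      = Sum.elim vs fun i => C (cc hk0 ε i) * X 1 := by
    funext v
    cases v with
    | inl j => simp [W]
    | inr i =>
        by_cases h : (i : ℕ) < k
        · simp [W, cc, h]
        · by_cases h2 : (i : ℕ) = k
          · simp [W, cc, h, h2, C_neg, neg_mul]
          · simp [W, cc, h, h2]
  rw [hfun]

lemma W_rel {g : ℕ} (ε : Fin k → ℂ) (hε : ∀ i, ε i ^ 2 = 1) {p}
    (hp : p ∈ Stmt14.rel k g) : aeval (W ε) p ∈ Jg g := by
  refine Submodule.span_induction ?_ ?_ ?_ ?_ hp
  · intro x hx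
    rcases hx with hx | ⟨i, rfl⟩
    · rw [Set.mem_singleton_iff] at hx
      subst hx
      rw [map_pow, aeval_X]
      have : W ε (Sum.inl 2) = X 2 := by simp [W, vs]
      rw [this]
      exact Ideal.subset_span rfl
    · have hz : aeval (W ε) ((X (Sum.inr i) : MvPolynomial (Fin 3 ⊕ Fin k) ℂ) ^ 2
          + X (Sum.inl 1) - 2) = 0 := by
        rw [map_sub, map_add, map_pow, aeval_X, aeval_X, map_ofNat,
          show W ε (Sum.inr i) = C (ε i) * X 1 from rfl,
          show W ε (Sum.inl 1) = 2 - X 1 ^ 2 from by simp [W, vs],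
          mul_pow, ← C_pow, hε i, C_1, one_mul]
        ring
      rw [hz]
      exact zero_mem _
  · exact zero_mem _
  · intro x y _ _ hx hy
    rw [map_add]
    exact add_mem hx hy
  · intro a x _ hx
    rw [smul_eq_mul, map_mul]
    exact Ideal.mul_mem_left _ _ hx

lemma prod_eval (dd : Fin (k + 2) → ℂ) (I : Finset (Fin (k + 2))) :
    (∏ i ∈ I, (C (dd i) * X 1 : B)) = C (∏ i ∈ I, dd i) * X 1 ^ I.card := by
  rw [Finset.prod_mul_distrib, Finset.prod_const, map_prod]

lemma eval_expr (hk0 : 0 < k) (ε : Fin k → ℂ) (I : Finset (Fin (k + 2)))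
    (f h : MvPolynomial (Fin 3) ℂ) :
    aeval (W ε) (Stmt14.pi k hk0
        (rename Sum.inl f * ∏ i ∈ I, X (Sum.inr i)
          + rename Sum.inl h * ∏ i ∈ Iᶜ, X (Sum.inr i))) =
      C (∏ i ∈ I, cc hk0 ε i) * (X 1 ^ I.card * sig f)
        + C (∏ i ∈ Iᶜ, cc hk0 ε i) * (X 1 ^ Iᶜ.card * sig h) := by
  rw [chi_pi]
  rw [map_add, map_mul, map_mul, map_prod, map_prod, aeval_rename, aeval_rename]
  have hl : (Sum.elim vs fun i => C (cc hk0 ε i) * X 1 : Fin 3 ⊕ Fin (k + 2) → B)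
      ∘ Sum.inl = vs := rfl
  rw [hl]
  have hX : ∀ i : Fin (k + 2),
      aeval (Sum.elim vs fun i => C (cc hk0 ε i) * X 1) (X (Sum.inr i) :
        MvPolynomial (Fin 3 ⊕ Fin (k + 2)) ℂ) = C (cc hk0 ε i) * X 1 := fun i => by
    rw [aeval_X]; rfl
  rw [Finset.prod_congr rfl fun i _ => hX i, Finset.prod_congr rfl fun i _ => hX i,
    prod_eval, prod_eval]
  show sig f * _ + sig h * _ = _
  ring

def sf (k : ℕ) : Fin (k + 2) → ℂ := fun i => if (i : ℕ) = k then -1 else 1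

def flf (k : ℕ) : Fin (k + 2) → ℂ := fun i => if k - 1 ≤ (i : ℕ) then -1 else 1

lemma cc_one (hk0 : 0 < k) (i : Fin (k + 2)) : cc hk0 (fun _ => 1) i = sf k i := by
  by_cases h : (i : ℕ) < k
  · have h2 : (i : ℕ) ≠ k := by omega
    simp [cc, sf, h, h2]
  · by_cases h2 : (i : ℕ) = k
    · simp [cc, sf, h, h2]
    · simp [cc, sf, h, h2]

lemma cc_two (hk0 : 0 < k) (i : Fin (k + 2)) :
    cc hk0 (fun j : Fin k => if (j : ℕ) = k - 1 then -1 else 1) i = sf k i * flf k i := by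
  by_cases h : (i : ℕ) < k
  · rw [cc, dif_pos h]
    show (if ((⟨(i : ℕ), h⟩ : Fin k) : ℕ) = k - 1 then (-1 : ℂ) else 1) = sf k i * flf k i
    by_cases h3 : (i : ℕ) = k - 1
    · rw [if_pos h3, sf, flf, if_neg (by omega : ¬ (i : ℕ) = k),
        if_pos (by omega : k - 1 ≤ (i : ℕ))]
      ring
    · rw [if_neg h3, sf, flf, if_neg (by omega : ¬ (i : ℕ) = k),
        if_neg (by omega : ¬ k - 1 ≤ (i : ℕ))]
      ring
  · rw [cc, dif_neg h]
    by_cases h2 : (i : ℕ) = k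
    · rw [if_pos h2]
      show -(if ((⟨k - 1, Nat.sub_lt hk0 one_pos⟩ : Fin k) : ℕ) = k - 1 then (-1 : ℂ) else 1)
          = sf k i * flf k i
      rw [if_pos rfl, sf, flf, if_pos h2, if_pos (by omega : k - 1 ≤ (i : ℕ))]
      ring
    · rw [if_neg h2]
      show (if ((⟨k - 1, Nat.sub_lt hk0 one_pos⟩ : Fin k) : ℕ) = k - 1 then (-1 : ℂ) else 1)
          = sf k i * flf k i
      rw [if_pos rfl, sf, flf, if_neg h2, if_pos (by omega : k - 1 ≤ (i : ℕ))]
      ring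

lemma prod_sq {m : ℕ} {c : Fin m → ℂ} (hc : ∀ i, c i = 1 ∨ c i = -1)
    (J : Finset (Fin m)) : (∏ i ∈ J, c i) * (∏ i ∈ J, c i) = 1 := by
  rw [← Finset.prod_mul_distrib]
  refine Finset.prod_eq_one fun i _ => ?_
  rcases hc i with h | h <;> rw [h] <;> norm_num

lemma sf_pm (k : ℕ) : ∀ i, sf k i = 1 ∨ sf k i = -1 := fun i => by
  by_cases h : (i : ℕ) = k <;> simp [sf, h]

lemma flf_pm (k : ℕ) : ∀ i, flf k i = 1 ∨ flf k i = -1 := fun i => by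
  by_cases h : k - 1 ≤ (i : ℕ) <;> simp [flf, h]

lemma prod_flf (hk0 : 0 < k) : (∏ i : Fin (k + 2), flf k i) = -1 := by
  have hsplit : (∏ i : Fin (k + 2), flf k i) =
      (∏ i ∈ Finset.univ.filter (fun i : Fin (k + 2) => k - 1 ≤ (i : ℕ)), (-1 : ℂ)) *
        ∏ i ∈ Finset.univ.filter (fun i : Fin (k + 2) => ¬ (k - 1 ≤ (i : ℕ))), (1 : ℂ) :=
    Finset.prod_ite (fun _ => (-1 : ℂ)) (fun _ => (1 : ℂ))
  have hcard : (Finset.univ.filter (fun i : Fin (k + 2) => k - 1 ≤ (i : ℕ))).card = 3 := by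
    refine Finset.card_eq_three.mpr ⟨⟨k - 1, by omega⟩, ⟨k, by omega⟩, ⟨k + 1, by omega⟩,
      ?_, ?_, ?_, ?_⟩
    · simp only [ne_eq, Fin.mk.injEq]; omega
    · simp only [ne_eq, Fin.mk.injEq]; omega
    · simp only [ne_eq, Fin.mk.injEq]; omega
    · ext i
      simp only [Finset.mem_filter, Finset.mem_univ, true_and, Finset.mem_insert,
        Finset.mem_singleton, Fin.ext_iff]
      omega
  rw [hsplit, Finset.prod_const, Finset.prod_const_one, hcard]
  norm_num

lemma mem_Jg {g : ℕ} {p : B} : p ∈ Jg g ↔ (X 2 : B) ^ (g + 1) ∣ p :=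
  Ideal.mem_span_singleton

end S14

end S14sec

open S14

open Stmt14 in
theorem stmt14 (g k : ℕ) (hk : Odd k) (hk0 : 0 < k)
    (I : Finset (Fin (k + 2))) (hI : I.card ≤ (k + 1) / 2)
    (f h : MvPolynomial (Fin 3) ℂ) :
    pi k hk0
        (rename Sum.inl f * ∏ i ∈ I, X (Sum.inr i)
          + rename Sum.inl h * ∏ i ∈ Iᶜ, X (Sum.inr i)) ∈ rel k g →
      (rename Sum.inl f * ∏ i ∈ I, X (Sum.inr i)
          + rename Sum.inl h * ∏ i ∈ Iᶜ, X (Sum.inr i)) ∈ rel (k + 2) g := by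
  intro hmem
  classical
  have hε1 : ∀ i : Fin k, ((fun _ => (1 : ℂ)) i) ^ 2 = 1 := fun i => one_pow 2
  have hε2 : ∀ i : Fin k,
      ((fun j : Fin k => if (j : ℕ) = k - 1 then (-1 : ℂ) else 1) i) ^ 2 = 1 := by
    intro i
    by_cases hi : (i : ℕ) = k - 1 <;> simp [hi]
  have m1' := W_rel _ hε1 hmem
  rw [eval_expr hk0 _ I f h] at m1'
  have m2' := W_rel _ hε2 hmem
  rw [eval_expr hk0 _ I f h] at m2'
  have hprod1I : (∏ i ∈ I, cc hk0 (fun _ => (1 : ℂ)) i) = ∏ i ∈ I, sf k i :=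
    Finset.prod_congr rfl fun i _ => cc_one hk0 i
  have hprod1c : (∏ i ∈ Iᶜ, cc hk0 (fun _ => (1 : ℂ)) i) = ∏ i ∈ Iᶜ, sf k i :=
    Finset.prod_congr rfl fun i _ => cc_one hk0 i
  have hprod2I : (∏ i ∈ I, cc hk0 (fun j : Fin k => if (j : ℕ) = k - 1 then (-1 : ℂ) else 1) i)
      = (∏ i ∈ I, sf k i) * ∏ i ∈ I, flf k i := by
    rw [Finset.prod_congr rfl fun i _ => cc_two hk0 i, Finset.prod_mul_distrib]
  have hprod2c : (∏ i ∈ Iᶜ, cc hk0 (fun j : Fin k => if (j : ℕ) = k - 1 then (-1 : ℂ) else 1) i)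
      = (∏ i ∈ Iᶜ, sf k i) * ∏ i ∈ Iᶜ, flf k i := by
    rw [Finset.prod_congr rfl fun i _ => cc_two hk0 i, Finset.prod_mul_distrib]
  rw [hprod1I, hprod1c] at m1'
  rw [hprod2I, hprod2c] at m2'
  set u := (X 1 ^ I.card * sig f : B) with hu_def
  set w := (X 1 ^ Iᶜ.card * sig h : B) with hw_def
  set A := ∏ i ∈ I, sf k i with hA_def
  set Bc := ∏ i ∈ Iᶜ, sf k i with hB_def
  set FI := ∏ i ∈ I, flf k i with hFI_def
  set FIc := ∏ i ∈ Iᶜ, flf k i with hFIc_def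
  have hsqA : A * A = 1 := prod_sq (sf_pm k) I
  have hsqB : Bc * Bc = 1 := prod_sq (sf_pm k) Iᶜ
  have hsqFI : FI * FI = 1 := prod_sq (flf_pm k) I
  have hTot : FI * FIc = -1 := by
    rw [hFI_def, hFIc_def, Finset.prod_mul_prod_compl]
    exact prod_flf hk0
  have hAne : A ≠ 0 := by
    intro h0
    rw [h0, mul_zero] at hsqA
    exact zero_ne_one hsqA
  have hBne : Bc ≠ 0 := by
    intro h0
    rw [h0, mul_zero] at hsqB
    exact zero_ne_one hsqB
  have m2'' : C A * u - C Bc * w ∈ Jg g := by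
    have hm := Ideal.mul_mem_left _ (C FI) m2'
    have e1 : (C FI : B) * C (A * FI) = C A := by
      rw [← C_mul, show FI * (A * FI) = A from by linear_combination A * hsqFI]
    have e2 : (C FI : B) * C (Bc * FIc) = -C Bc := by
      rw [← C_mul, show FI * (Bc * FIc) = -Bc from by linear_combination Bc * hTot, C_neg]
    have heq : C FI * (C (A * FI) * u + C (Bc * FIc) * w) = C A * u - C Bc * w := by
      linear_combination u * e1 + w * e2
    rwa [heq] at hm
  have hu : u ∈ Jg g := by
    have hm := Ideal.mul_mem_left _ (C ((2 * A)⁻¹)) (add_mem m1' m2'')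
    have heq : C ((2 * A)⁻¹) * ((C A * u + C Bc * w) + (C A * u - C Bc * w)) = u := by
      have e3 : (C (2 * A) : B) = 2 * C A := by rw [C_mul, map_ofNat]
      have e4 : (C ((2 * A)⁻¹) : B) * C (2 * A) = 1 := by
        rw [← C_mul, inv_mul_cancel₀ (by simp [hAne]), C_1]
      linear_combination u * e4 - (C ((2 * A)⁻¹) : B) * u * e3
    rwa [heq] at hm
  have hw : w ∈ Jg g := by
    have hm := Ideal.mul_mem_left _ (C ((2 * Bc)⁻¹)) (sub_mem m1' m2'')
    have heq : C ((2 * Bc)⁻¹) * ((C A * u + C Bc * w) - (C A * u - C Bc * w)) = w := by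
      have e3 : (C (2 * Bc) : B) = 2 * C Bc := by rw [C_mul, map_ofNat]
      have e4 : (C ((2 * Bc)⁻¹) : B) * C (2 * Bc) = 1 := by
        rw [← C_mul, inv_mul_cancel₀ (by simp [hBne]), C_1]
      linear_combination w * e4 - (C ((2 * Bc)⁻¹) : B) * w * e3
    rwa [heq] at hm
  obtain ⟨f', hf'⟩ : (X 2 : B) ^ (g + 1) ∣ f := sig_dvd (mem_Jg.mp hu)
  obtain ⟨h', hh'⟩ : (X 2 : B) ^ (g + 1) ∣ h := sig_dvd (mem_Jg.mp hw)
  have hγ : (X (Sum.inl 2) : MvPolynomial (Fin 3 ⊕ Fin (k + 2)) ℂ) ^ (g + 1)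
      ∈ rel (k + 2) g := Ideal.subset_span (Set.mem_union_left _ rfl)
  rw [hf', hh', map_mul, map_mul, map_pow, rename_X]
  exact add_mem (Ideal.mul_mem_right _ _ (Ideal.mul_mem_right _ _ hγ))
    (Ideal.mul_mem_right _ _ (Ideal.mul_mem_right _ _ hγ))
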